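/- Let d ≥ 1. The Laplacian polytope P_{∂σ_{d+1}}, the convex hull of the columns of the (d+2)×(d+2) matrix L with L_{ii} = d+1 and L_{ij} = (-1)^{i+j-1} for i ≠ j, has dimension d if d is even and dimension d+1 if d is odd. -/

import Mathlib

open Matrix

/-- The `d`-th Laplacian matrix of the boundary of the `(d+1)`-simplex:
`L_{ii} = d+1` and `L_{ij} = (-1)^{i+j-1}` for `i ≠ j` (1-indexed; here 0-indexed,
so the sign is `(-1)^{i+j+1}`). -/
def lap (d : ℕ) : Matrix (Fin (d+2)) (Fin (d+2)) ℝ :=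
  Matrix.of fun i j => if i = j then (d+1 : ℝ) else (-1 : ℝ)^((i:ℕ)+(j:ℕ)+1)

namespace Stmt7Aux

noncomputable def phiL (n : ℕ) : (Fin n → ℝ) →ₗ[ℝ] ℝ where
  toFun x := ∑ i, x i
  map_add' x y := by simp [Finset.sum_add_distrib]
  map_smul' c x := by simp [Finset.mul_sum]

noncomputable def psiL (n : ℕ) : (Fin n → ℝ) →ₗ[ℝ] ℝ where
  toFun x := ∑ i, (-1:ℝ)^(i.1) * x i
  map_add' x y := by simp [mul_add, Finset.sum_add_distrib]
  map_smul' c x := by simp [Finset.mul_sum, mul_left_comm]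

lemma lap_apply (d : ℕ) (i j : Fin (d+2)) :
    lap d i j = (d+2 : ℝ) * (if i = j then 1 else 0) - (-1:ℝ)^(i.1) * (-1:ℝ)^(j.1) := by
  unfold lap
  simp only [of_apply]
  split
  · rename_i h
    subst h
    rw [← pow_add]
    have : Even (i.1 + i.1) := ⟨i.1, rfl⟩
    rw [this.neg_one_pow]
    ring
  · rw [pow_succ, ← pow_add]
    ring

lemma sum_eps (n : ℕ) : ∑ i : Fin n, (-1:ℝ)^(i.1) = if Even n then 0 else 1 := by
  rw [Fin.sum_univ_eq_sum_range]
  exact neg_one_geom_sum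

lemma sum_smul_col (d : ℕ) (y : Fin (d+2) → ℝ) (i : Fin (d+2)) :
    (∑ j, y j • (lap d)ᵀ j) i
      = (d+2:ℝ) * y i - (-1:ℝ)^(i.1) * (∑ j : Fin (d+2), (-1:ℝ)^(j.1) * y j) := by
  rw [Finset.sum_apply]
  simp only [Pi.smul_apply, transpose_apply, lap_apply, smul_eq_mul, mul_sub]
  rw [Finset.sum_sub_distrib]
  congr 1
  · rw [Finset.sum_congr rfl (fun j _ => by rw [mul_ite, mul_one, mul_zero, mul_comm])]
    simp [Finset.sum_ite_eq, eq_comm, mul_comm]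
  · rw [Finset.mul_sum]
    exact Finset.sum_congr rfl fun j _ => by ring

lemma psi_col (d : ℕ) (j : Fin (d+2)) : psiL (d+2) ((lap d)ᵀ j) = 0 := by
  show (∑ i : Fin (d+2), (-1:ℝ)^(i.1) * (lap d)ᵀ j i) = 0
  simp only [transpose_apply, lap_apply, mul_sub]
  rw [Finset.sum_sub_distrib]
  have h1 : ∑ i : Fin (d+2), (-1:ℝ)^(i.1) * ((d+2:ℝ) * (if i = j then 1 else 0))
      = (-1:ℝ)^(j.1) * (d+2) := by
    rw [Finset.sum_congr rfl (fun i _ => by rw [mul_ite, mul_one, mul_zero, mul_comm])]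
    simp [Finset.sum_ite_eq, eq_comm, mul_comm]
  have h2 : ∑ i : Fin (d+2), (-1:ℝ)^(i.1) * ((-1:ℝ)^(i.1) * (-1:ℝ)^(j.1))
      = (-1:ℝ)^(j.1) * (d+2) := by
    rw [Finset.sum_congr rfl (fun i _ => by
      rw [← mul_assoc, ← mul_pow, neg_mul_neg, one_mul, one_pow, one_mul])]
    simp [Finset.card_univ]
    ring
  rw [h1, h2, sub_self]

lemma phi_col (d : ℕ) (hpar : Even d) (j : Fin (d+2)) :
    phiL (d+2) ((lap d)ᵀ j) = d + 2 := by
  show (∑ i : Fin (d+2), (lap d)ᵀ j i) = d + 2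
  simp only [transpose_apply, lap_apply]
  rw [Finset.sum_sub_distrib]
  have h1 : ∑ i : Fin (d+2), (d+2:ℝ) * (if i = j then 1 else 0) = d + 2 := by
    simp [Finset.sum_ite_eq, eq_comm, mul_ite]
  have h2 : ∑ i : Fin (d+2), (-1:ℝ)^(i.1) * (-1:ℝ)^(j.1) = 0 := by
    have : Even (d + 2) := hpar.add even_two
    rw [← Finset.sum_mul, sum_eps, if_pos this, zero_mul]
  rw [h1, h2, sub_zero]

lemma phi_single (n : ℕ) (j : Fin n) : phiL n (Pi.single j (1:ℝ)) = 1 := by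
  show (∑ i, Pi.single j (1:ℝ) i) = 1
  simp [Pi.single_apply, Finset.sum_ite_eq]

lemma psi_single (n : ℕ) (j : Fin n) : psiL n (Pi.single j (1:ℝ)) = (-1:ℝ)^(j.1) := by
  show (∑ i : Fin n, (-1:ℝ)^(i.1) * (Pi.single j (1:ℝ) : Fin n → ℝ) i) = (-1:ℝ)^(j.1)
  simp [Pi.single_apply, mul_ite, Finset.sum_ite_eq]

end Stmt7Aux

open Stmt7Aux in
/-- for `d ≥ 1`, the Laplacian polytope `P = conv(columns of L)` has
dimension `d` if `d` is even and `d+1` if `d` is odd (the dimension of a polytope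
being the dimension of its affine hull, i.e. of its direction space). -/
theorem stmt7 (d : ℕ) (hd : 1 ≤ d) :
    Module.finrank ℝ (affineSpan ℝ (Set.range (lap d)ᵀ)).direction =
      if Even d then d else d + 1 := by
  classical
  set c : Fin (d+2) → (Fin (d+2) → ℝ) := (lap d)ᵀ with hc
  set u : Fin (d+2) → (Fin (d+2) → ℝ) := fun j => c j - c 0 with hu
  set S : Submodule ℝ (Fin (d+2) → ℝ) := Submodule.span ℝ (Set.range u) with hSdef
  have hdir : (affineSpan ℝ (Set.range (lap d)ᵀ)).direction = S := by
    rw [direction_affineSpan, vectorSpan_range_eq_span_range_vsub_right ℝ (lap d)ᵀ 0]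
    rfl
  have hsum_u : ∀ y : Fin (d+2) → ℝ,
      ∑ j, y j • u j = (∑ j, y j • c j) - (∑ j, y j) • c 0 := by
    intro y
    simp only [hu, smul_sub]
    rw [Finset.sum_sub_distrib, ← Finset.sum_smul]
  have hspan_mem : ∀ y : Fin (d+2) → ℝ, (∑ j, y j • u j) ∈ S :=
    fun y => Submodule.sum_mem _ fun j _ =>
      Submodule.smul_mem _ _ (Submodule.subset_span ⟨j, rfl⟩)
  have hxsum : ∀ x : Fin (d+2) → ℝ, psiL (d+2) x = 0 →
      ∑ j, ((d+2:ℝ)⁻¹ * x j) • c j = x := by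
    intro x hx
    funext i
    rw [hc, sum_smul_col]
    have h1 : (∑ j : Fin (d+2), (-1:ℝ)^(j.1) * ((d+2:ℝ)⁻¹ * x j))
        = (d+2:ℝ)⁻¹ * psiL (d+2) x := by
      show _ = (d+2:ℝ)⁻¹ * ∑ i : Fin (d+2), (-1:ℝ)^(i.1) * x i
      rw [Finset.mul_sum]
      exact Finset.sum_congr rfl fun j _ => by ring
    rw [h1, hx, mul_zero, mul_zero, sub_zero, ← mul_assoc,
      mul_inv_cancel₀ (by positivity), one_mul]
  have hphisum : ∀ x : Fin (d+2) → ℝ,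
      (∑ j, ((d+2:ℝ)⁻¹ * x j)) = (d+2:ℝ)⁻¹ * phiL (d+2) x := by
    intro x
    show _ = (d+2:ℝ)⁻¹ * ∑ i, x i
    rw [Finset.mul_sum]
  by_cases hpar : Even d
  · -- even case
    set Φ := (phiL (d+2)).prod (psiL (d+2)) with hΦ
    have hS : S = LinearMap.ker Φ := by
      apply le_antisymm
      · rw [hSdef, Submodule.span_le]
        rintro _ ⟨j, rfl⟩
        simp only [SetLike.mem_coe, LinearMap.mem_ker, hΦ, LinearMap.prod_apply, hu,
          map_sub, Function.prod, Prod.mk_sub_mk, Prod.mk_eq_zero]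
        constructor
        · rw [hc, phi_col d hpar j, phi_col d hpar 0, sub_self]
        · rw [hc, psi_col d j, psi_col d 0, sub_self]
      · intro x hx
        rw [LinearMap.mem_ker, hΦ, LinearMap.prod_apply, Function.prod, Prod.mk_eq_zero] at hx
        obtain ⟨hx1, hx2⟩ := hx
        have : x = ∑ j, ((d+2:ℝ)⁻¹ * x j) • u j := by
          rw [hsum_u, hxsum x hx2, hphisum, hx1, mul_zero, zero_smul, sub_zero]
        rw [this]
        exact hspan_mem _
    have hsurj : Function.Surjective Φ := by
      intro p
      refine ⟨((p.1+p.2)/2) • (Pi.single (0 : Fin (d+2)) (1:ℝ) : Fin (d+2) → ℝ)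
        + ((p.1-p.2)/2) • (Pi.single (1 : Fin (d+2)) (1:ℝ) : Fin (d+2) → ℝ), ?_⟩
      have h0 : Φ (Pi.single (0 : Fin (d+2)) 1) = (1, 1) := by
        rw [hΦ, LinearMap.prod_apply, Function.prod, phi_single, psi_single]
        simp
      have h1 : Φ (Pi.single (1 : Fin (d+2)) 1) = (1, -1) := by
        rw [hΦ, LinearMap.prod_apply, Function.prod, phi_single, psi_single]
        simp
      rw [map_add, LinearMap.map_smul, LinearMap.map_smul, h0, h1]
      ext
      · simp; ring
      · simp; ring
    have hrange : LinearMap.range Φ = ⊤ := LinearMap.range_eq_top.mpr hsurj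
    have hrn := LinearMap.finrank_range_add_finrank_ker Φ
    rw [hrange, finrank_top] at hrn
    have h2 : Module.finrank ℝ (ℝ × ℝ) = 2 := by simp
    have hn : Module.finrank ℝ (Fin (d+2) → ℝ) = d + 2 := by simp
    rw [h2, hn] at hrn
    rw [hdir, hS, if_pos hpar]
    omega
  · -- odd case
    have hodd2 : ¬ Even (d + 2) := by
      simp only [Nat.even_add] at *
      tauto
    have hc0 : c 0 ∈ S := by
      set α : Fin (d+2) → ℝ := fun j => (if j = 0 then 1 else 0) - (-1:ℝ)^(j.1) with hα
      have hψα : (∑ j : Fin (d+2), (-1:ℝ)^(j.1) * α j) = 1 - (d+2) := by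
        simp only [hα, mul_sub]
        rw [Finset.sum_sub_distrib]
        have e1 : ∑ j : Fin (d+2), (-1:ℝ)^(j.1) * (if j = 0 then 1 else 0) = 1 := by
          rw [Finset.sum_congr rfl (fun j _ => by rw [mul_ite, mul_one, mul_zero])]
          simp [Finset.sum_ite_eq, eq_comm]
        have e2 : ∑ j : Fin (d+2), (-1:ℝ)^(j.1) * (-1:ℝ)^(j.1) = (d+2:ℝ) := by
          rw [Finset.sum_congr rfl (fun j _ => by
            rw [← mul_pow, neg_mul_neg, one_mul, one_pow])]
          simp [Finset.card_univ]
        rw [e1, e2]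
      have hsumα : (∑ j, α j) = 0 := by
        simp only [hα]
        rw [Finset.sum_sub_distrib]
        have e1 : ∑ j : Fin (d+2), (if j = (0 : Fin (d+2)) then (1:ℝ) else 0) = 1 := by
          simp [Finset.sum_ite_eq, eq_comm]
        rw [e1, sum_eps, if_neg hodd2, sub_self]
      have hαc : ∑ j, α j • c j = c 0 := by
        funext i
        rw [hc, sum_smul_col, hψα, transpose_apply, lap_apply]
        simp only [hα, Fin.val_zero, pow_zero, mul_one]
        ring
      have : c 0 = ∑ j, α j • u j := by
        rw [hsum_u, hαc, hsumα, zero_smul, sub_zero]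
      rw [this]
      exact hspan_mem _
    have hS : S = LinearMap.ker (psiL (d+2)) := by
      apply le_antisymm
      · rw [hSdef, Submodule.span_le]
        rintro _ ⟨j, rfl⟩
        simp only [SetLike.mem_coe, LinearMap.mem_ker, hu, map_sub]
        rw [hc, psi_col d j, psi_col d 0, sub_self]
      · intro x hx
        rw [LinearMap.mem_ker] at hx
        have hx' : x = (∑ j, ((d+2:ℝ)⁻¹ * x j) • u j)
            + (∑ j, ((d+2:ℝ)⁻¹ * x j)) • c 0 := by
          rw [hsum_u, hxsum x hx]
          abel
        rw [hx']
        exact Submodule.add_mem _ (hspan_mem _) (Submodule.smul_mem _ _ hc0)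
    have hψne : psiL (d+2) ≠ 0 := by
      intro h
      have := psi_single (d+2) 0
      rw [h] at this
      simp at this
    have hrn := LinearMap.finrank_range_add_finrank_ker (psiL (d+2))
    rw [Module.Dual.range_eq_top_of_ne_zero hψne, finrank_top] at hrn
    have h1 : Module.finrank ℝ ℝ = 1 := Module.finrank_self ℝ
    have hn : Module.finrank ℝ (Fin (d+2) → ℝ) = d + 2 := by simp
    rw [h1, hn] at hrn
    rw [hdir, hS, if_neg hpar]
    omega
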